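/- arXiv:2110.03910 — 3 statements merged into one kernel-verified Lean document; each statement's English description precedes it below -/
import Mathlib

section
/- Let {ψₙ}, {δₙ}, {αₙ} be sequences in [0,∞) with ψₙ₊₁ ≤ ψₙ + αₙ(ψₙ - ψₙ₋₁) + δₙ for all n ≥ 1, ∑ δₙ < ∞, and 0 ≤ αₙ ≤ α < 1 for some α and all n. Then ∑ₙ max(ψₙ - ψₙ₋₁, 0) < ∞ and limₙ ψₙ exists in [0,∞). -/
theorem inertial_sequence_lemma
    (ψ δ a : ℕ → ℝ) (α : ℝ)
    (hψ : ∀ n, 0 ≤ ψ n) (hδ : ∀ n, 0 ≤ δ n)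
    (hrec : ∀ n ≥ 1, ψ (n + 1) ≤ ψ n + a n * (ψ n - ψ (n - 1)) + δ n)
    (hsum : Summable δ)
    (ha : ∀ n, 0 ≤ a n ∧ a n ≤ α) (hα : α < 1) :
    Summable (fun n => max (ψ (n + 1) - ψ n) 0) ∧
      ∃ ψstar : ℝ, 0 ≤ ψstar ∧ Filter.Tendsto ψ Filter.atTop (nhds ψstar) := by
  set θ : ℕ → ℝ := fun n => max (ψ (n + 1) - ψ n) 0 with hθdef
  have hθ0 : ∀ n, 0 ≤ θ n := fun n => le_max_right _ _
  have hα0 : 0 ≤ α := le_trans (ha 0).1 (ha 0).2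
  have h1 : ∀ n, θ (n + 1) ≤ α * θ n + δ (n + 1) := by
    intro n
    have hr := hrec (n + 1) (by omega)
    simp only [Nat.add_sub_cancel] at hr
    have had : a (n + 1) * (ψ (n + 1) - ψ n) ≤ α * θ n := by
      rcases le_or_gt (ψ (n + 1) - ψ n) 0 with h | h
      · have : a (n + 1) * (ψ (n + 1) - ψ n) ≤ 0 :=
          mul_nonpos_of_nonneg_of_nonpos (ha (n + 1)).1 h
        exact this.trans (mul_nonneg hα0 (hθ0 n))
      · have hmax : θ n = ψ (n + 1) - ψ n := max_eq_left h.le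
        rw [hmax]
        exact mul_le_mul_of_nonneg_right (ha (n + 1)).2 h.le
    have hnn : 0 ≤ α * θ n + δ (n + 1) :=
      add_nonneg (mul_nonneg hα0 (hθ0 n)) (hδ (n + 1))
    refine max_le ?_ hnn
    linarith
  obtain ⟨D, hD⟩ := hsum
  have hD' : ∀ n, ∑ i ∈ Finset.range n, δ i ≤ D := by
    intro n
    exact sum_le_hasSum _ (fun i _ => hδ i) hD
  set c : ℝ := (θ 0 + D) / (1 - α) with hcdef
  have h1α : 0 < 1 - α := by linarith
  have hDnn : 0 ≤ D := le_trans (by simpa using hδ 0) (hD' 1)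
  have hc0 : 0 ≤ c := div_nonneg (add_nonneg (hθ0 0) hDnn) h1α.le
  have hcle : (1 - α) * c = θ 0 + D := by
    rw [hcdef]
    field_simp [h1α.ne']
  have hpart : ∀ n, ∑ i ∈ Finset.range n, θ i ≤ c := by
    intro n
    induction n with
    | zero => simpa using hc0
    | succ n ih =>
      have hstep : ∑ i ∈ Finset.range (n + 1), θ i
          ≤ θ 0 + α * (∑ i ∈ Finset.range n, θ i) + ∑ i ∈ Finset.range n, δ (i + 1) := by
        rw [Finset.sum_range_succ']
        have : ∑ i ∈ Finset.range n, θ (i + 1)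
            ≤ ∑ i ∈ Finset.range n, (α * θ i + δ (i + 1)) :=
          Finset.sum_le_sum (fun i _ => h1 i)
        rw [Finset.sum_add_distrib, ← Finset.mul_sum] at this
        linarith
      have hδs : ∑ i ∈ Finset.range n, δ (i + 1) ≤ D := by
        have := hD' (n + 1)
        rw [Finset.sum_range_succ'] at this
        have h0 := hδ 0
        linarith
      have hαs : α * (∑ i ∈ Finset.range n, θ i) ≤ α * c :=
        mul_le_mul_of_nonneg_left ih hα0
      nlinarith
  have hsumθ : Summable θ := summable_of_sum_range_le hθ0 hpart
  refine ⟨hsumθ, ?_⟩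
  obtain ⟨T, hT⟩ := hsumθ
  set v : ℕ → ℝ := fun n => ψ n - ∑ i ∈ Finset.range n, θ i with hvdef
  have hvanti : Antitone v := by
    apply antitone_nat_of_succ_le
    intro n
    simp only [hvdef, Finset.sum_range_succ]
    have : ψ (n + 1) - ψ n ≤ θ n := le_max_left _ _
    linarith
  have hTle : ∀ n, ∑ i ∈ Finset.range n, θ i ≤ T := fun n =>
    sum_le_hasSum _ (fun i _ => hθ0 i) hT
  have hvbdd : BddBelow (Set.range v) := by
    refine ⟨-T, ?_⟩
    rintro x ⟨n, rfl⟩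
    have := hTle n
    have := hψ n
    simp only [hvdef]
    linarith
  have hvlim : Filter.Tendsto v Filter.atTop (nhds (⨅ n, v n)) :=
    tendsto_atTop_ciInf hvanti hvbdd
  have hSlim : Filter.Tendsto (fun n => ∑ i ∈ Finset.range n, θ i) Filter.atTop (nhds T) :=
    hT.tendsto_sum_nat
  have hψlim : Filter.Tendsto ψ Filter.atTop (nhds ((⨅ n, v n) + T)) := by
    have := hvlim.add hSlim
    convert this using 1
    ext n
    simp [hvdef]
  refine ⟨(⨅ n, v n) + T, ?_, hψlim⟩
  exact ge_of_tendsto' hψlim hψ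
end

section
/- Let H be a real Hilbert space, C ⊆ H nonempty closed convex, and S : C → H nonexpansive. If {xₙ} ⊆ C converges weakly to x ∈ H and ‖S xₙ - xₙ‖ → 0, then x ∈ C and S x = x. -/
theorem demiclosedness_principle
    {H : Type*} [NormedAddCommGroup H] [InnerProductSpace ℝ H] [CompleteSpace H]
    (C : Set H) (hne : C.Nonempty) (hclosed : IsClosed C) (hconv : Convex ℝ C)
    (S : H → H) (hS : ∀ x ∈ C, ∀ y ∈ C, ‖S x - S y‖ ≤ ‖x - y‖)
    (x : ℕ → H) (hxC : ∀ n, x n ∈ C) (p : H)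
    (hweak : ∀ z : H, Filter.Tendsto (fun n => (inner ℝ (x n) z : ℝ)) Filter.atTop
      (nhds (inner ℝ p z)))
    (hfix : Filter.Tendsto (fun n => ‖S (x n) - x n‖) Filter.atTop (nhds 0)) :
    p ∈ C ∧ S p = p := by
  -- weak limits respect continuous linear functionals
  have hweak' : ∀ f : H →L[ℝ] ℝ, Filter.Tendsto (fun n => f (x n)) Filter.atTop (nhds (f p)) := by
    intro f
    obtain ⟨y, hy⟩ := (InnerProductSpace.toDual ℝ H).surjective f
    have : ∀ w : H, f w = inner ℝ w y := by
      intro w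
      rw [← hy]
      simp [InnerProductSpace.toDual_apply_apply, real_inner_comm]
    simpa [this] using hweak y
  -- p ∈ C by Hahn-Banach separation
  have hpC : p ∈ C := by
    by_contra hp
    obtain ⟨f, u, hfu, hup⟩ := geometric_hahn_banach_closed_point hconv hclosed hp
    have hle : ∀ n, f (x n) ≤ u := fun n => (hfu _ (hxC n)).le
    have : f p ≤ u := le_of_tendsto (hweak' f) (Filter.Eventually.of_forall hle)
    linarith
  -- boundedness via Banach-Steinhaus
  obtain ⟨M, hM⟩ : ∃ M, ∀ n, ‖x n‖ ≤ M := by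
    obtain ⟨M, hM⟩ := banach_steinhaus (g := fun n => innerSL ℝ (x n)) (fun z => by
      obtain ⟨b, hb⟩ := ((hweak z).norm).bddAbove_range
      exact ⟨b, fun n => hb (Set.mem_range_self n)⟩)
    exact ⟨M, fun n => by simpa [innerSL_apply_norm] using hM n⟩
  -- key inequality
  set q : H := p - S p with hq
  have hkey : ∀ n, ‖q‖ ^ 2 ≤ ‖S (x n) - x n‖ ^ 2 + 2 * ‖S (x n) - x n‖ * (M + ‖p‖)
      - 2 * (inner ℝ (x n - p) q : ℝ) := by
    intro n
    set ε := ‖S (x n) - x n‖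
    have h1 : ‖x n - S p‖ ≤ ε + ‖x n - p‖ := by
      calc ‖x n - S p‖ ≤ ‖x n - S (x n)‖ + ‖S (x n) - S p‖ := norm_sub_le_norm_sub_add_norm_sub _ _ _
        _ ≤ ε + ‖x n - p‖ := by
            have := hS (x n) (hxC n) p hpC
            rw [show ‖x n - S (x n)‖ = ε from norm_sub_rev _ _]
            linarith
    have hεnn : 0 ≤ ε := norm_nonneg _
    have h2 : ‖x n - S p‖ ^ 2 ≤ ε ^ 2 + 2 * ε * ‖x n - p‖ + ‖x n - p‖ ^ 2 := by
      have h0 : 0 ≤ ‖x n - S p‖ := norm_nonneg _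
      nlinarith [pow_le_pow_left₀ h0 h1 2]
    have hexp : ‖x n - S p‖ ^ 2
        = ‖x n - p‖ ^ 2 + 2 * (inner ℝ (x n - p) q : ℝ) + ‖q‖ ^ 2 := by
      have h3 : x n - S p = (x n - p) + q := by rw [hq]; abel
      rw [h3, @norm_add_sq_real]
    have hxp : ‖x n - p‖ ≤ M + ‖p‖ :=
      (norm_sub_le _ _).trans (by linarith [hM n])
    nlinarith
  -- RHS tends to 0
  have hin : Filter.Tendsto (fun n => (inner ℝ (x n - p) q : ℝ)) Filter.atTop (nhds 0) := by
    have : ∀ n, (inner ℝ (x n - p) q : ℝ) = inner ℝ (x n) q - inner ℝ p q := fun n => inner_sub_left _ _ _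
    simp only [this]
    simpa using (hweak q).sub_const (inner ℝ p q)
  have hrhs : Filter.Tendsto
      (fun n => ‖S (x n) - x n‖ ^ 2 + 2 * ‖S (x n) - x n‖ * (M + ‖p‖)
        - 2 * (inner ℝ (x n - p) q : ℝ)) Filter.atTop (nhds 0) := by
    have := ((hfix.pow 2).add ((hfix.const_mul 2).mul_const (M + ‖p‖))).sub (hin.const_mul 2)
    simpa using this
  have hq0 : ‖q‖ ^ 2 ≤ 0 := ge_of_tendsto hrhs (Filter.Eventually.of_forall hkey)
  have : q = 0 := by
    have := norm_nonneg q
    have hn : ‖q‖ = 0 := by nlinarith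
    exact norm_eq_zero.mp hn
  refine ⟨hpC, ?_⟩
  rw [hq] at this
  exact (sub_eq_zero.mp this).symm
end

section
/- Let H be a real Hilbert space, S, J' : H → H nonexpansive with common fixed point x*, and the inertial modified S-iteration xₙ₊₁ = (1-αₙ)S yₙ + αₙ J' yₙ, yₙ = (1-βₙ)wₙ + βₙ S wₙ, wₙ = xₙ + θₙ(xₙ - xₙ₋₁), with ∑θₙ < ∞, θₙ ∈ [0,θ] ⊂ [0,1), αₙ, βₙ ∈ [δ, 1-δ] for some δ ∈ (0,1/2), and {xₙ} bounded. Then limₙ ‖xₙ - x*‖ exists. -/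
open Filter

lemma convex_norm_sub_le' {H : Type*} [NormedAddCommGroup H] [NormedSpace ℝ H]
    {c : ℝ} (hc0 : 0 ≤ c) (hc1 : c ≤ 1) (u v z : H) :
    ‖((1 - c) • u + c • v) - z‖ ≤ (1 - c) * ‖u - z‖ + c * ‖v - z‖ := by
  have hz : ((1 - c) • u + c • v) - z = (1 - c) • (u - z) + c • (v - z) := by
    rw [smul_sub, smul_sub, sub_smul, sub_smul, one_smul, one_smul]
    abel
  rw [hz]
  calc ‖(1 - c) • (u - z) + c • (v - z)‖
      ≤ ‖(1 - c) • (u - z)‖ + ‖c • (v - z)‖ := norm_add_le _ _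
    _ = (1 - c) * ‖u - z‖ + c * ‖v - z‖ := by
        rw [norm_smul, norm_smul, Real.norm_of_nonneg (by linarith),
          Real.norm_of_nonneg hc0]

lemma tendsto_of_step' {f ε : ℕ → ℝ} (hf0 : ∀ n, 0 ≤ f n) (hε0 : ∀ n, 0 ≤ ε n)
    (hsum : Summable ε) (hstep : ∀ n, f (n + 1) ≤ f n + ε n) :
    ∃ c, Tendsto f atTop (nhds c) := by
  set t : ℕ → ℝ := fun n => ∑' k, ε (k + n) with ht
  have hts : ∀ n, Summable (fun k => ε (k + n)) := fun n =>
    (summable_nat_add_iff n).mpr hsum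
  have htail : ∀ n, t n = ε n + t (n + 1) := by
    intro n
    have h := Summable.tsum_eq_zero_add (hts n)
    have hfun : (fun k => ε (k + 1 + n)) = fun k => ε (k + (n + 1)) := by
      funext k; congr 1; omega
    simpa [ht, hfun] using h
  have htnn : ∀ n, 0 ≤ t n := fun n => tsum_nonneg (fun k => hε0 _)
  set g : ℕ → ℝ := fun n => f n + t n with hg
  have hganti : Antitone g := by
    apply antitone_nat_of_succ_le
    intro n
    have := hstep n
    have := htail n
    simp only [hg]
    linarith
  have hgbdd : BddBelow (Set.range g) := by
    refine ⟨0, ?_⟩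
    rintro _ ⟨n, rfl⟩
    exact add_nonneg (hf0 n) (htnn n)
  have hgconv : Tendsto g atTop (nhds (⨅ n, g n)) :=
    tendsto_atTop_ciInf hganti hgbdd
  have htzero : Tendsto t atTop (nhds 0) := by
    simpa [ht] using tendsto_sum_nat_add ε
  refine ⟨⨅ n, g n, ?_⟩
  have : Tendsto (fun n => g n - t n) atTop (nhds ((⨅ n, g n) - 0)) :=
    hgconv.sub htzero
  simpa [hg] using this

theorem limit_of_distance_exists
    {H : Type*} [NormedAddCommGroup H] [InnerProductSpace ℝ H] [CompleteSpace H]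
    (S J : H → H)
    (hS : ∀ x y : H, ‖S x - S y‖ ≤ ‖x - y‖)
    (hJ : ∀ x y : H, ‖J x - J y‖ ≤ ‖x - y‖)
    (xstar : H) (hSx : S xstar = xstar) (hJx : J xstar = xstar)
    (x w y : ℕ → H) (θ a b : ℕ → ℝ) (θbar δ : ℝ)
    (hθsum : Summable θ) (hθ : ∀ n, θ n ∈ Set.Icc 0 θbar) (hθbar : θbar < 1)
    (hδ : δ ∈ Set.Ioo (0 : ℝ) (1 / 2))
    (ha : ∀ n, a n ∈ Set.Icc δ (1 - δ)) (hb : ∀ n, b n ∈ Set.Icc δ (1 - δ))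
    (hw : ∀ n, w n = x n + θ n • (x n - x (n - 1)))
    (hy : ∀ n, y n = (1 - b n) • w n + b n • S (w n))
    (hx : ∀ n, x (n + 1) = (1 - a n) • S (y n) + a n • J (y n))
    (hbdd : ∃ M : ℝ, ∀ n, ‖x n‖ ≤ M) :
    ∃ c : ℝ, Filter.Tendsto (fun n => ‖x n - xstar‖) Filter.atTop (nhds c) := by
  obtain ⟨M, hM⟩ := hbdd
  have hM0 : 0 ≤ M := le_trans (norm_nonneg _) (hM 0)
  have hδ0 : 0 < δ := hδ.1
  have hδ2 : δ < 1 / 2 := hδ.2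
  have ha0 : ∀ n, 0 ≤ a n := fun n => le_trans hδ0.le (ha n).1
  have ha1 : ∀ n, a n ≤ 1 := fun n => le_trans (ha n).2 (by linarith)
  have hb0 : ∀ n, 0 ≤ b n := fun n => le_trans hδ0.le (hb n).1
  have hb1 : ∀ n, b n ≤ 1 := fun n => le_trans (hb n).2 (by linarith)
  have hθ0 : ∀ n, 0 ≤ θ n := fun n => (hθ n).1
  apply tendsto_of_step' (ε := fun n => θ n * (2 * M))
    (fun n => norm_nonneg _)
    (fun n => mul_nonneg (hθ0 n) (by linarith))
    (hθsum.mul_right _)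
  intro n
  have h1 : ‖x (n + 1) - xstar‖ ≤ ‖y n - xstar‖ := by
    rw [hx n]
    calc ‖((1 - a n) • S (y n) + a n • J (y n)) - xstar‖
        ≤ (1 - a n) * ‖S (y n) - xstar‖ + a n * ‖J (y n) - xstar‖ :=
          convex_norm_sub_le' (ha0 n) (ha1 n) _ _ _
      _ ≤ (1 - a n) * ‖y n - xstar‖ + a n * ‖y n - xstar‖ := by
          have hSle : ‖S (y n) - xstar‖ ≤ ‖y n - xstar‖ := by
            simpa [hSx] using hS (y n) xstar
          have hJle : ‖J (y n) - xstar‖ ≤ ‖y n - xstar‖ := by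
            simpa [hJx] using hJ (y n) xstar
          have h1n : (0:ℝ) ≤ 1 - a n := by linarith [ha1 n]
          exact add_le_add (mul_le_mul_of_nonneg_left hSle h1n)
            (mul_le_mul_of_nonneg_left hJle (ha0 n))
      _ = ‖y n - xstar‖ := by ring
  have h2 : ‖y n - xstar‖ ≤ ‖w n - xstar‖ := by
    rw [hy n]
    calc ‖((1 - b n) • w n + b n • S (w n)) - xstar‖
        ≤ (1 - b n) * ‖w n - xstar‖ + b n * ‖S (w n) - xstar‖ :=
          convex_norm_sub_le' (hb0 n) (hb1 n) _ _ _
      _ ≤ (1 - b n) * ‖w n - xstar‖ + b n * ‖w n - xstar‖ := by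
          have hSle : ‖S (w n) - xstar‖ ≤ ‖w n - xstar‖ := by
            simpa [hSx] using hS (w n) xstar
          exact add_le_add_right (mul_le_mul_of_nonneg_left hSle (hb0 n)) _
      _ = ‖w n - xstar‖ := by ring
  have h3 : ‖w n - xstar‖ ≤ ‖x n - xstar‖ + θ n * ‖x n - x (n - 1)‖ := by
    rw [hw n]
    have : (x n + θ n • (x n - x (n - 1))) - xstar
        = (x n - xstar) + θ n • (x n - x (n - 1)) := by abel
    rw [this]
    calc ‖(x n - xstar) + θ n • (x n - x (n - 1))‖
        ≤ ‖x n - xstar‖ + ‖θ n • (x n - x (n - 1))‖ := norm_add_le _ _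
      _ = ‖x n - xstar‖ + θ n * ‖x n - x (n - 1)‖ := by
          rw [norm_smul, Real.norm_of_nonneg (hθ0 n)]
  have h4 : θ n * ‖x n - x (n - 1)‖ ≤ θ n * (2 * M) := by
    apply mul_le_mul_of_nonneg_left _ (hθ0 n)
    calc ‖x n - x (n - 1)‖ ≤ ‖x n‖ + ‖x (n - 1)‖ := norm_sub_le _ _
      _ ≤ M + M := add_le_add (hM n) (hM (n - 1))
      _ = 2 * M := by ring
  calc ‖x (n + 1) - xstar‖ ≤ ‖w n - xstar‖ := h1.trans h2
    _ ≤ ‖x n - xstar‖ + θ n * ‖x n - x (n - 1)‖ := h3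
    _ ≤ ‖x n - xstar‖ + θ n * (2 * M) := by linarith
end
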